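/- Let e be an integer with e ∉ {−1, 0, 1} and let α ∈ Sₙ be a permutation that has at least one cycle of length a, for some 2 ≤ a ≤ n such that d = gcd(a, eᵃ − 1) ≠ 1 (gcd of the integer a and the integer eᵃ − 1). Then the power conjugate equation (e*α) has a non-trivial solution y ≠ 1 such that y^d = 1. -/

import Mathlib

/-- Corollary 2.10: if `α ∈ Sₙ` has a cycle of length `a` for some
`2 ≤ a ≤ n` with `d = gcd(a, e ^ a - 1) ≠ 1`, then `(e*α)` has a non-trivial solution
`y ≠ 1` with `y ^ d = 1`. -/
theorem stmt_11 (n : ℕ) (e : ℤ) (he : e ∉ ({-1, 0, 1} : Set ℤ))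
    (α : Equiv.Perm (Fin n)) (a : ℕ) (ha2 : 2 ≤ a) (han : a ≤ n)
    (ha : a ∈ α.cycleType)
    (d : ℕ) (hd : d = Int.gcd (a : ℤ) (e ^ a - 1)) (hd1 : d ≠ 1) :
    ∃ y : Equiv.Perm (Fin n), y ≠ 1 ∧ α * y * α⁻¹ = y ^ e ∧ y ^ d = 1 := by
  classical
  -- extract the cycle
  rw [Equiv.Perm.cycleType_def, Multiset.mem_map] at ha
  obtain ⟨c, hcf, hcard⟩ := ha
  rw [← Finset.mem_def] at hcf
  obtain ⟨hcyc, hcα⟩ := Equiv.Perm.mem_cycleFactorsFinset_iff.mp hcf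
  simp only [Function.comp_apply] at hcard
  -- arithmetic setup
  set p := d.minFac with hpdef
  have hp : p.Prime := Nat.minFac_prime hd1
  haveI : Fact p.Prime := ⟨hp⟩
  haveI : NeZero p := ⟨hp.ne_zero⟩
  have hpd : p ∣ d := Nat.minFac_dvd d
  have hda : d ∣ a := by
    have h1 : ((Int.gcd (a : ℤ) (e ^ a - 1) : ℕ) : ℤ) ∣ (a : ℤ) := Int.gcd_dvd_left _ _
    rw [← hd] at h1
    exact_mod_cast h1
  have hpa : p ∣ a := hpd.trans hda
  have hpe : (p : ℤ) ∣ e ^ a - 1 := by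
    have h1 : ((Int.gcd (a : ℤ) (e ^ a - 1) : ℕ) : ℤ) ∣ e ^ a - 1 := Int.gcd_dvd_right _ _
    rw [← hd] at h1
    exact dvd_trans (Int.natCast_dvd_natCast.mpr hpd) h1
  set m := a / p with hmdef
  have hmp : m * p = a := Nat.div_mul_cancel hpa
  have ha0 : 0 < a := lt_of_lt_of_le two_pos ha2
  have hm0 : 0 < m := Nat.div_pos (Nat.le_of_dvd ha0 hpa) hp.pos
  -- e is a unit mod p
  have hea : ((e : ZMod p)) ^ a = 1 := by
    have h1 : ((e ^ a - 1 : ℤ) : ZMod p) = 0 := by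
      rw [ZMod.intCast_zmod_eq_zero_iff_dvd]; exact hpe
    push_cast at h1
    linear_combination h1
  have heu : IsUnit (e : ZMod p) := by
    refine IsUnit.of_mul_eq_one ((e : ZMod p) ^ (a - 1)) ?_
    have h2 : (e : ZMod p) * (e : ZMod p) ^ (a - 1) = (e : ZMod p) ^ (a - 1 + 1) := by
      rw [pow_succ']
    have h3 : a - 1 + 1 = a := by omega
    rw [h2, h3]
    exact hea
  set ε : (ZMod p)ˣ := heu.unit with hεdef
  have hεe : (ε : ZMod p) = (e : ZMod p) := heu.unit_spec
  have hεa : ε ^ a = 1 := by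
    ext
    push_cast [hεe]
    exact hea
  have hεm : ε ^ m = 1 := by
    have h1 : orderOf ε ∣ a := orderOf_dvd_of_pow_eq_one hεa
    have h2 : orderOf ε ∣ p - 1 := by
      have h2' := orderOf_dvd_card (x := ε)
      rwa [ZMod.card_units] at h2'
    have h3 : Nat.Coprime (orderOf ε) p := by
      rw [Nat.coprime_comm]
      refine (Nat.Prime.coprime_iff_not_dvd hp).mpr ?_
      intro hcon
      have hp2 := hp.two_le
      have hple : p ≤ p - 1 := Nat.le_of_dvd (by omega) (hcon.trans h2)
      omega
    have h4 : orderOf ε ∣ m := by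
      refine h3.dvd_of_dvd_mul_right ?_
      rwa [hmp]
    exact orderOf_dvd_iff_pow_eq_one.mp h4
  have hεmz : ∀ s : ℤ, ε ^ ((m : ℤ) * s) = 1 := by
    intro s
    rw [zpow_mul, zpow_natCast, hεm, one_zpow]
  -- the cycle c
  have hordc : orderOf c = a := by rw [hcyc.orderOf, hcard]
  have hca : c ^ a = 1 := by rw [← hordc]; exact pow_orderOf_eq_one c
  obtain ⟨x₀, hx₀⟩ : c.support.Nonempty := Finset.card_pos.mp (by omega)
  -- characterization of fixed points of powers
  have hchar : ∀ t : ℤ, (c ^ t) x₀ = x₀ ↔ (a : ℤ) ∣ t := by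
    intro t
    constructor
    · intro h
      have h1 : c ^ t = c ^ ((t % (a : ℤ)).toNat) := by
        rw [← zpow_natCast, Int.toNat_of_nonneg (Int.emod_nonneg t (by exact_mod_cast ha0.ne'))]
        conv_lhs => rw [← Int.emod_add_mul_ediv t (a : ℤ)]
        rw [zpow_add, zpow_mul, zpow_natCast, hca, one_zpow, mul_one]
      rw [h1] at h
      have h2 : c ^ ((t % (a : ℤ)).toNat) = 1 :=
        (hcyc.pow_eq_one_iff' (Equiv.Perm.mem_support.mp hx₀)).mpr h
      have h3 : a ∣ (t % (a : ℤ)).toNat := by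
        have h3' := orderOf_dvd_of_pow_eq_one h2
        rwa [hordc] at h3'
      have h4 : (t % (a : ℤ)).toNat < a := by
        have h5 := Int.emod_lt_of_pos t (by exact_mod_cast ha0 : (0:ℤ) < (a:ℤ))
        have h6 := Int.emod_nonneg t (by exact_mod_cast ha0.ne' : (a:ℤ) ≠ 0)
        omega
      have h5 : (t % (a : ℤ)).toNat = 0 := Nat.eq_zero_of_dvd_of_lt h3 h4
      have h6 := Int.emod_nonneg t (by exact_mod_cast ha0.ne' : (a:ℤ) ≠ 0)
      have h7 : t % (a : ℤ) = 0 := by omega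
      exact Int.dvd_of_emod_eq_zero h7
    · rintro ⟨s, rfl⟩
      rw [zpow_mul, zpow_natCast, hca, one_zpow, Equiv.Perm.one_apply]
  have hεwd : ∀ i j : ℤ, (c ^ i) x₀ = (c ^ j) x₀ → ε ^ i = ε ^ j := by
    intro i j hij
    have h1 : (c ^ (i - j)) x₀ = x₀ := by
      have h2 : c ^ (i - j) = c ^ (-j) * c ^ i := by
        rw [← zpow_add]; congr 1; ring
      rw [h2, Equiv.Perm.mul_apply, hij, ← Equiv.Perm.mul_apply, ← zpow_add]
      simp
    obtain ⟨s, hs⟩ := (hchar _).mp h1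
    have h3 : ε ^ (i - j) = 1 := by
      rw [hs, zpow_mul, zpow_natCast, hεa, one_zpow]
    have h4 : ε ^ i = ε ^ (i - j) * ε ^ j := by rw [← zpow_add]; congr 1; ring
    rw [h4, h3, one_mul]
  -- membership in support vs SameCycle
  have hsc : ∀ z, z ∈ c.support ↔ c.SameCycle x₀ z := by
    intro z
    constructor
    · intro hz
      exact hcyc.sameCycle (Equiv.Perm.mem_support.mp hx₀) (Equiv.Perm.mem_support.mp hz)
    · rintro ⟨i, rfl⟩
      exact Equiv.Perm.zpow_apply_mem_support.mpr hx₀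
  -- the cocycle k
  set k : Fin n → ZMod p := fun z =>
    if h : c.SameCycle x₀ z then ((ε ^ (-(h.choose)) : (ZMod p)ˣ) : ZMod p) else 0 with hkdef
  have hwd : ∀ (z : Fin n) (i : ℤ), (c ^ i) x₀ = z →
      k z = ((ε ^ (-i) : (ZMod p)ˣ) : ZMod p) := by
    intro z i hi
    have hmem : c.SameCycle x₀ z := ⟨i, hi⟩
    have hch : (c ^ hmem.choose) x₀ = z := hmem.choose_spec
    have heq : ε ^ hmem.choose = ε ^ i := hεwd hmem.choose i (by rw [hch, hi])
    simp only [hkdef, dif_pos hmem]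
    congr 1
    rw [zpow_neg, zpow_neg, heq]
  have hk0 : ∀ z, z ∉ c.support → k z = 0 := by
    intro z hz
    simp only [hkdef]
    exact dif_neg (fun h => hz ((hsc z).mpr h))
  have hkx : ∀ z, z ∈ c.support → k z ≠ 0 := by
    intro z hz
    obtain ⟨i, hi⟩ := (hsc z).mp hz
    rw [hwd z i hi]
    exact Units.ne_zero _
  have hkshift : ∀ z ∈ c.support, ∀ j : ℤ,
      k ((c ^ j) z) = ((ε ^ (-j) : (ZMod p)ˣ) : ZMod p) * k z := by
    intro z hz j
    obtain ⟨i, hi⟩ := (hsc z).mp hz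
    have h1 : (c ^ (j + i)) x₀ = (c ^ j) z := by
      rw [zpow_add, Equiv.Perm.mul_apply, hi]
    rw [hwd _ _ h1, hwd _ _ hi]
    rw [show -(j + i) = -j + -i by ring, zpow_add, Units.val_mul]
  have hkm : ∀ (z : Fin n) (s : ℤ), k ((c ^ ((m : ℤ) * s)) z) = k z := by
    intro z s
    by_cases hz : z ∈ c.support
    · rw [hkshift z hz, show -((m:ℤ) * s) = (m:ℤ) * (-s) by ring, hεmz, Units.val_one, one_mul]
    · rw [Equiv.Perm.zpow_apply_eq_self_of_apply_eq_self (Equiv.Perm.notMem_support.mp hz)]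
  -- the exponent function
  set φ : Fin n → ℤ := fun z => (m : ℤ) * ((k z).val : ℤ) with hφdef
  have hφm : ∀ (z : Fin n) (s : ℤ), φ ((c ^ ((m : ℤ) * s)) z) = φ z := by
    intro z s
    simp only [hφdef, hkm]
  have hφP : ∀ z, φ ((c ^ (φ z)) z) = φ z := by
    intro z
    have h1 : (c ^ (φ z)) z = (c ^ ((m : ℤ) * ((k z).val : ℤ))) z := rfl
    rw [h1, hφm]
  have hφN : ∀ z, φ ((c ^ (-(φ z))) z) = φ z := by
    intro z
    have h1 : (c ^ (-(φ z))) z = (c ^ ((m : ℤ) * (-((k z).val : ℤ)))) z := by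
      simp only [hφdef]
      congr 1
      rw [mul_neg]
    rw [h1, hφm]
  -- the solution y
  set y : Equiv.Perm (Fin n) :=
    { toFun := fun z => (c ^ (φ z)) z
      invFun := fun z => (c ^ (-(φ z))) z
      left_inv := by
        intro z
        simp only
        rw [hφP z, ← Equiv.Perm.mul_apply, ← zpow_add]
        simp
      right_inv := by
        intro z
        simp only
        rw [hφN z, ← Equiv.Perm.mul_apply, ← zpow_add]
        simp } with hydef
  have hy : ∀ z, y z = (c ^ (φ z)) z := fun z => rfl
  -- powers of y
  have hypow : ∀ (j : ℕ) (z : Fin n), (y ^ j) z = (c ^ ((j : ℤ) * φ z)) z := by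
    intro j
    induction j with
    | zero => intro z; simp
    | succ j ih =>
      intro z
      rw [pow_succ, Equiv.Perm.mul_apply, hy z, ih ((c ^ (φ z)) z), hφP z,
        ← Equiv.Perm.mul_apply, ← zpow_add]
      congr 2
      push_cast
      ring
  have hyp1 : y ^ p = 1 := by
    apply Equiv.Perm.ext
    intro z
    rw [hypow p z]
    have h1 : (p : ℤ) * φ z = (a : ℤ) * ((k z).val : ℤ) := by
      simp only [hφdef]
      have h2 : (m : ℤ) * (p : ℤ) = (a : ℤ) := by exact_mod_cast hmp
      linear_combination ((k z).val : ℤ) * h2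
    rw [h1, zpow_mul, zpow_natCast c a, hca, one_zpow, Equiv.Perm.one_apply]
  have hyd : y ^ d = 1 := by
    obtain ⟨s, hs⟩ := hpd
    rw [hs, pow_mul, hyp1, one_pow]
  have hyne : y ≠ 1 := by
    intro hcon
    have h1 : y x₀ = x₀ := by rw [hcon]; rfl
    rw [hy] at h1
    have h2 : (a : ℤ) ∣ φ x₀ := (hchar _).mp h1
    have h3 : (k x₀).val ≠ 0 := fun h => hkx x₀ hx₀ ((ZMod.val_eq_zero _).mp h)
    have h4 : (k x₀).val < p := ZMod.val_lt _
    have h5 : 0 < φ x₀ := by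
      simp only [hφdef]
      have : 0 < (k x₀).val := Nat.pos_of_ne_zero h3
      positivity
    have h6 : φ x₀ < (a : ℤ) := by
      simp only [hφdef]
      have h7 : m * (k x₀).val < m * p := mul_lt_mul_of_pos_left h4 hm0
      rw [hmp] at h7
      exact_mod_cast h7
    have := Int.le_of_dvd h5 h2
    omega
  -- reduce e mod p
  set t : ℕ := (e % (p : ℤ)).toNat with htdef
  have hpz : ((p : ℤ)) ≠ 0 := by exact_mod_cast hp.ne_zero
  have ht : (t : ℤ) = e % (p : ℤ) := Int.toNat_of_nonneg (Int.emod_nonneg e hpz)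
  have htz : ((t : ℕ) : ZMod p) = (e : ZMod p) := by
    have h1 : ((t : ℕ) : ZMod p) = (((t : ℤ)) : ZMod p) := by push_cast; ring
    rw [h1, ht, Int.emod_def]
    push_cast
    simp
  have hye : y ^ e = y ^ t := by
    have h1 : y ^ e = y ^ ((t : ℤ)) := by
      rw [ht]
      conv_lhs => rw [← Int.emod_add_mul_ediv e (p : ℤ)]
      rw [zpow_add, zpow_mul, zpow_natCast, hyp1, one_zpow, mul_one]
    rw [h1, zpow_natCast]
  -- α agrees with c on the support of c
  have hαc : ∀ z ∈ c.support, α z = c z := fun z hz => (hcα z hz).symm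
  have hαinv : ∀ w ∈ c.support, α⁻¹ w = c⁻¹ w := by
    intro w hw
    have h1 : c⁻¹ w ∈ c.support := by
      rw [← Equiv.Perm.support_inv] at hw ⊢
      exact Equiv.Perm.apply_mem_support.mpr hw
    rw [Equiv.Perm.inv_eq_iff_eq, hαc _ h1, ← Equiv.Perm.mul_apply, mul_inv_cancel, Equiv.Perm.one_apply]
  -- the conjugation identity
  have hconj : α * y * α⁻¹ = y ^ t := by
    ext w
    simp only [Equiv.Perm.mul_apply]
    by_cases hw : w ∈ c.support
    · rw [hαinv w hw]
      have hcw : c⁻¹ w ∈ c.support := by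
        rw [← Equiv.Perm.support_inv] at hw ⊢
        exact Equiv.Perm.apply_mem_support.mpr hw
      have hmem : (c ^ (φ (c⁻¹ w))) (c⁻¹ w) ∈ c.support :=
        Equiv.Perm.zpow_apply_mem_support.mpr hcw
      rw [hy (c⁻¹ w), hαc _ hmem, hypow t w]
      -- the key divisibility
      have hkc : k (c⁻¹ w) = (e : ZMod p) * k w := by
        have h1 : c⁻¹ w = (c ^ (-1 : ℤ)) w := by simp
        rw [h1, hkshift w hw (-1 : ℤ), neg_neg, zpow_one, hεe]
      have hkey : (a : ℤ) ∣ φ (c⁻¹ w) - (t : ℤ) * φ w := by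
        have h2 : ((((k (c⁻¹ w)).val : ℤ) - (t : ℤ) * ((k w).val : ℤ) : ℤ) : ZMod p) = 0 := by
          push_cast
          rw [ZMod.natCast_zmod_val, ZMod.natCast_zmod_val, hkc, htz]
          ring
        have h2' : (p : ℤ) ∣ ((k (c⁻¹ w)).val : ℤ) - (t : ℤ) * ((k w).val : ℤ) :=
          (ZMod.intCast_zmod_eq_zero_iff_dvd _ _).mp h2
        obtain ⟨s, hs⟩ := h2'
        refine ⟨s, ?_⟩
        simp only [hφdef]
        have hmpz : (m : ℤ) * (p : ℤ) = (a : ℤ) := by exact_mod_cast hmp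
        linear_combination (m : ℤ) * hs + s * hmpz
      obtain ⟨s, hs⟩ := hkey
      have hφeq : φ (c⁻¹ w) = (t : ℤ) * φ w + (a : ℤ) * s := by linarith
      have hz1 : c ^ ((t : ℤ) * φ w + (a : ℤ) * s) = c ^ ((t : ℤ) * φ w) := by
        rw [zpow_add, zpow_mul c ((a : ℕ) : ℤ) s, zpow_natCast c a, hca, one_zpow, mul_one]
      rw [hφeq, hz1]
      rw [← Equiv.Perm.mul_apply, ← Equiv.Perm.mul_apply,
        ((Commute.refl c).zpow_right ((t : ℤ) * φ w)).eq, mul_inv_cancel_right]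
    · have h1 : α⁻¹ w ∉ c.support := by
        intro hmem
        apply hw
        have h2 : α (α⁻¹ w) ∈ c.support := by
          rw [hαc _ hmem]
          exact Equiv.Perm.apply_mem_support.mpr hmem
        rwa [← Equiv.Perm.mul_apply, mul_inv_cancel, Equiv.Perm.one_apply] at h2
      have hφ0 : φ (α⁻¹ w) = 0 := by
        simp only [hφdef, hk0 _ h1, ZMod.val_zero, Int.natCast_zero, mul_zero]
      have h2 : y (α⁻¹ w) = α⁻¹ w := by
        rw [hy, hφ0, zpow_zero, Equiv.Perm.one_apply]
      rw [h2, ← Equiv.Perm.mul_apply, mul_inv_cancel, Equiv.Perm.one_apply, hypow t w]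
      have h3 : φ w = 0 := by
        simp only [hφdef, hk0 w hw, ZMod.val_zero, Int.natCast_zero, mul_zero]
      rw [h3, mul_zero, zpow_zero, Equiv.Perm.one_apply]
  exact ⟨y, hyne, by rw [hconj, ← hye], hyd⟩
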